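/- Let (T, (P_t)) be a tree-decomposition of a finite set E with symmetric submodular order function, and let Q be a tangle that orients every separation corresponding to an edge of T. Then there is a unique smallest subtree S(Q) of T in which Q lives; in particular, if Q lives in subgraphs S₁ and S₂ of T, then S₁ ∩ S₂ is nonempty and Q lives in S₁ ∩ S₂. -/

import Mathlib

variable {E : Type*}

/-- `f` is symmetric: `f X = f (E \ X)` for all `X ⊆ E`. -/
def FSymm (f : Set E → ℤ) : Prop := ∀ X : Set E, f X = f Xᶜ

/-- `f` is submodular. -/
def FSubmod (f : Set E → ℤ) : Prop :=
  ∀ X Y : Set E, f (X ∩ Y) + f (X ∪ Y) ≤ f X + f Y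

/-- Separations `(A,B)` and `(C,D)` are nested: some side of the first
is contained in some side of the second. -/
def Nested (A B C D : Set E) : Prop := A ⊆ C ∨ A ⊆ D ∨ B ⊆ C ∨ B ⊆ D

/-- `T` is a tangle of order `k+1`: a set of small sides of separations of
order at most `k`, orienting every separation of order at most `k`, such that
no three small sides cover `E` and the complement of a singleton is never small. -/
def IsTangle (f : Set E → ℤ) (k : ℤ) (T : Set (Set E)) : Prop :=
  (∀ A ∈ T, f A ≤ k) ∧
  (∀ A : Set E, f A ≤ k → A ∈ T ∨ Aᶜ ∈ T) ∧
  (∀ A₁ ∈ T, ∀ A₂ ∈ T, ∀ A₃ ∈ T, A₁ ∪ A₂ ∪ A₃ ≠ Set.univ) ∧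
  (∀ e : E, ({e}ᶜ : Set E) ∉ T)

/-- A tangle is maximal if it is not included in any other tangle. -/
def IsMaximalTangle (f : Set E → ℤ) (T : Set (Set E)) : Prop :=
  (∃ k, IsTangle f k T) ∧
  ∀ T' : Set (Set E), (∃ k, IsTangle f k T') → T ⊆ T' → T' = T

/-- The separation with sides `A`, `Aᶜ` distinguishes the tangles `P` and `Q`. -/
def Distinguishes (A : Set E) (P Q : Set (Set E)) : Prop :=
  (A ∈ P ∧ Aᶜ ∈ Q) ∨ (Aᶜ ∈ P ∧ A ∈ Q)

/-- The separation with sides `A`, `Aᶜ` distinguishes `P` and `Q` efficiently. -/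
def DistinguishesEff (f : Set E → ℤ) (A : Set E) (P Q : Set (Set E)) : Prop :=
  Distinguishes A P Q ∧ ∀ C : Set E, Distinguishes C P Q → f A ≤ f C

variable {V : Type*}

/-- `P` is a partition of `E` into (possibly empty) classes indexed by `V`. -/
def IsPartitionFam (P : V → Set E) : Prop :=
  (∀ x y : V, x ≠ y → Disjoint (P x) (P y)) ∧ (⋃ x, P x) = Set.univ

/-- For an edge `tu` of the decomposition tree `G`, the side `S_t` of the
corresponding separation: the union of the parts over the component of
`G - tu` containing `t`. -/
def treeSide (G : SimpleGraph V) (P : V → Set E) (t u : V) : Set E :=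
  ⋃ x ∈ {x | (G.deleteEdges {s(t, u)}).Reachable t x}, P x

/-- A tangle `Q` lives in a nonempty subgraph `S` of the decomposition tree if
for every vertex `t` of `S` and every edge `tu` incident with `t` but not in
`S`, `Q` orients the corresponding separation towards the `t`-side, i.e. the
`u`-side is small in `Q`. -/
def LivesIn (G : SimpleGraph V) (P : V → Set E) (Q : Set (Set E))
    (S : G.Subgraph) : Prop :=
  S.verts.Nonempty ∧
    ∀ t ∈ S.verts, ∀ u : V, G.Adj t u → ¬ S.Adj t u → treeSide G P u t ∈ Q

open SimpleGraph

private lemma aux_bridge {V : Type*} {G : SimpleGraph V} (hac : G.IsAcyclic) {a b : V}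
    (h : G.Adj a b) : ¬ (G.deleteEdges {s(a,b)}).Reachable a b :=
  isBridge_iff.mp (isAcyclic_iff_forall_adj_isBridge.mp hac h)

private lemma aux_reach_subset {V : Type*} {G H : SimpleGraph V} (hle : H ≤ G) {a c d : V}
    (hca : (G.deleteEdges {s(c,d)}).Reachable c a)
    (had : ¬ H.Reachable a d) :
    ∀ x, H.Reachable a x → (G.deleteEdges {s(c,d)}).Reachable c x := by
  classical
  intro x hx
  obtain ⟨w⟩ := hx
  refine hca.trans ⟨w.transfer _ ?_⟩
  intro e' he'
  have h1 : e' ∈ G.edgeSet := edgeSet_mono hle (w.edges_subset_edgeSet he')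
  rw [edgeSet_deleteEdges]
  refine ⟨h1, ?_⟩
  simp only [Set.mem_singleton_iff]
  rintro rfl
  exact had ⟨w.takeUntil d (w.snd_mem_support_of_mem_edges he')⟩

private lemma aux_treeSide_subset {V E : Type*} {G : SimpleGraph V} (P : V → Set E) {a b c d : V}
    (hca : (G.deleteEdges {s(c,d)}).Reachable c a)
    (had : ¬ (G.deleteEdges {s(a,b)}).Reachable a d) :
    treeSide G P a b ⊆ treeSide G P c d :=
  Set.biUnion_subset_biUnion_left (aux_reach_subset (SimpleGraph.deleteEdges_le _) hca had)

private lemma treeSide_swap {V E : Type*} (G : SimpleGraph V) (P : V → Set E) (t u : V) :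
    treeSide G P u t = ⋃ x ∈ {x | (G.deleteEdges {s(t,u)}).Reachable u x}, P x := by
  unfold treeSide
  rw [Sym2.eq_swap]

private lemma aux_split {V : Type*} (G : SimpleGraph V) {t u : V} :
    ∀ {y x : V}, G.Walk y x →
      ((G.deleteEdges {s(t,u)}).Reachable t y ∨ (G.deleteEdges {s(t,u)}).Reachable u y) →
      ((G.deleteEdges {s(t,u)}).Reachable t x ∨ (G.deleteEdges {s(t,u)}).Reachable u x) := by
  intro y x w
  induction w with
  | nil => exact id
  | @cons y z x' hadj p ih =>
    intro hy
    apply ih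
    by_cases he : s(y,z) = s(t,u)
    · rcases Sym2.eq_iff.mp he with ⟨rfl, rfl⟩ | ⟨rfl, rfl⟩
      · exact Or.inr (Reachable.refl _)
      · exact Or.inl (Reachable.refl _)
    · have hadj' : (G.deleteEdges {s(t,u)}).Adj y z := by
        rw [SimpleGraph.deleteEdges_adj]; exact ⟨hadj, by simpa using he⟩
      rcases hy with h1 | h1
      · exact Or.inl (h1.trans hadj'.reachable)
      · exact Or.inr (h1.trans hadj'.reachable)

private lemma aux_cover {V E : Type*} {G : SimpleGraph V} (hconn : G.Connected)
    {P : V → Set E} (hP2 : (⋃ x, P x) = Set.univ) {t u : V} (h : G.Adj t u) :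
    treeSide G P t u ∪ treeSide G P u t = Set.univ := by
  rw [Set.eq_univ_iff_forall]
  intro e
  have he : e ∈ ⋃ x, P x := by rw [hP2]; trivial
  obtain ⟨x, hx⟩ := Set.mem_iUnion.mp he
  obtain ⟨w⟩ := hconn.preconnected t x
  rcases aux_split G w (Or.inl (Reachable.refl t)) with h1 | h1
  · exact Or.inl (Set.mem_biUnion h1 hx)
  · right
    rw [treeSide_swap]
    exact Set.mem_biUnion h1 hx

/-- If a tangle lives in two subgraphs then it lives in their (nonempty)
intersection; consequently there is a unique smallest subtree in which it
lives. -/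
theorem stmt_15 [Fintype E] [Fintype V] (f : Set E → ℤ)
    (hsym : FSymm f) (hsub : FSubmod f)
    (G : SimpleGraph V) (hG : G.IsTree) (P : V → Set E) (hP : IsPartitionFam P)
    (Q : Set (Set E)) (hQ : ∃ k, IsTangle f k Q)
    (hor : ∀ t u : V, G.Adj t u →
      treeSide G P t u ∈ Q ∨ treeSide G P u t ∈ Q) :
    (∀ S₁ S₂ : G.Subgraph, LivesIn G P Q S₁ → LivesIn G P Q S₂ →
      LivesIn G P Q (S₁ ⊓ S₂)) ∧
    ∃! S : G.Subgraph, LivesIn G P Q S ∧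
      ∀ S' : G.Subgraph, LivesIn G P Q S' → S ≤ S' := by
  classical
  obtain ⟨k, hk1, hk2, hk3, hk4⟩ := hQ
  obtain ⟨hconn, hacyc⟩ := hG
  -- two small sides cannot cover everything
  have hT2 : ∀ A ∈ Q, ∀ B ∈ Q, A ∪ B = Set.univ → False := by
    intro A hA B hB hAB
    exact hk3 A hA B hB B hB (by rw [Set.union_assoc, Set.union_self, hAB])
  -- at most one side of an edge separation is small
  have huniq : ∀ {t u : V}, G.Adj t u → treeSide G P t u ∈ Q → treeSide G P u t ∈ Q → False := by
    intro t u h h1 h2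
    exact hT2 _ h1 _ h2 (aux_cover hconn hP.2 h)
  have hVne : Nonempty V := hconn.nonempty
  -- existence of a sink
  obtain ⟨t₀, ht₀⟩ : ∃ t₀ : V, ∀ u : V, G.Adj t₀ u → treeSide G P u t₀ ∈ Q := by
    by_cases hE : ∃ a b : V, G.Adj a b ∧ treeSide G P a b ∈ Q
    · set M : Set ℕ := {n | ∃ a b : V, G.Adj a b ∧ treeSide G P a b ∈ Q ∧
          ({x | (G.deleteEdges {s(a,b)}).Reachable b x}).ncard = n} with hMdef
      have hMne : M.Nonempty := by
        obtain ⟨a, b, h1, h2⟩ := hE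
        exact ⟨_, a, b, h1, h2, rfl⟩
      obtain ⟨a, b, hab, habQ, hcard⟩ := Nat.sInf_mem hMne
      refine ⟨b, ?_⟩
      intro w hbw
      by_contra hnot
      have hbwQ : treeSide G P b w ∈ Q := (hor b w hbw).resolve_right hnot
      have hwa : w ≠ a := by
        rintro rfl
        exact huniq hab habQ hbwQ
      have hba : b ≠ a := hab.ne'
      -- the component of w in G − bw is strictly inside the component of b in G − ab
      have hb_notin : ¬ (G.deleteEdges {s(b,w)}).Reachable w b :=
        fun hr => aux_bridge hacyc hbw hr.symm
      have hsubs : {x | (G.deleteEdges {s(b,w)}).Reachable w x}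
          ⊆ {x | (G.deleteEdges {s(a,b)}).Reachable b x} := by
        have hswap : ({s(a,b)} : Set (Sym2 V)) = {s(b,a)} := by rw [Sym2.eq_swap]
        intro x hx
        simp only [Set.mem_setOf_eq, hswap]
        refine aux_reach_subset (SimpleGraph.deleteEdges_le _) ?_ ?_ x hx
        · -- (G − ba).Reachable b w
          refine Adj.reachable ?_
          rw [SimpleGraph.deleteEdges_adj]
          refine ⟨hbw, ?_⟩
          simp only [Set.mem_singleton_iff]
          intro he
          rcases Sym2.eq_iff.mp he with ⟨h1, h2⟩ | ⟨h1, h2⟩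
          · exact hwa h2
          · exact hba h1
        · -- ¬ (G − bw).Reachable w a
          intro hr
          apply hb_notin
          refine hr.trans (Adj.reachable ?_)
          rw [SimpleGraph.deleteEdges_adj]
          refine ⟨hab, ?_⟩
          simp only [Set.mem_singleton_iff]
          intro he
          rcases Sym2.eq_iff.mp he with ⟨h1, h2⟩ | ⟨h1, h2⟩
          · exact hba h1.symm
          · exact hwa h1.symm
      have hss : {x | (G.deleteEdges {s(b,w)}).Reachable w x}
          ⊂ {x | (G.deleteEdges {s(a,b)}).Reachable b x} := by
        rw [Set.ssubset_iff_of_subset hsubs]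
        exact ⟨b, Reachable.refl b, hb_notin⟩
      have hlt := Set.ncard_lt_ncard hss (Set.toFinite _)
      have hle' : sInf M ≤ ({x | (G.deleteEdges {s(b,w)}).Reachable w x}).ncard :=
        Nat.sInf_le ⟨b, w, hbw, hbwQ, rfl⟩
      omega
    · push_neg at hE
      obtain ⟨t₀⟩ := hVne
      refine ⟨t₀, fun u h => ?_⟩
      rcases hor t₀ u h with h1 | h1
      · exact absurd h1 (hE _ _ h)
      · exact absurd h1 (hE _ _ h.symm)
  -- every separation points towards the sink t₀
  have hbig : ∀ n : ℕ, ∀ a b : V, G.Adj a b →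
      ∀ w : (G.deleteEdges {s(a,b)}).Walk b t₀, w.IsPath → w.length = n →
      treeSide G P a b ∈ Q := by
    intro n
    induction n using Nat.strong_induction_on with
    | _ n ih =>
      intro a b hab w hw hlen
      cases w with
      | nil => exact ht₀ a hab.symm
      | @cons _ c _ h p =>
        have hbc : G.Adj b c := (SimpleGraph.deleteEdges_adj.mp h).1
        have hne : s(b,c) ≠ s(a,b) := by
          have := (SimpleGraph.deleteEdges_adj.mp h).2
          simpa using this
        have hca : c ≠ a := by
          rintro rfl
          exact hne (Sym2.eq_swap)
        have hba : a ≠ b := hab.ne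
        obtain ⟨hp, hbp⟩ := (Walk.cons_isPath_iff _ _).mp hw
        have hedges : ∀ e ∈ p.edges, e ∈ (G.deleteEdges {s(b,c)}).edgeSet := by
          intro e he
          have h1 := p.edges_subset_edgeSet he
          rw [SimpleGraph.edgeSet_deleteEdges] at h1 ⊢
          refine ⟨h1.1, ?_⟩
          simp only [Set.mem_singleton_iff]
          rintro rfl
          exact hbp (p.fst_mem_support_of_mem_edges he)
        have hQbc : treeSide G P b c ∈ Q := by
          refine ih p.length ?_ b c hbc (p.transfer _ hedges) ?_ (Walk.length_transfer _ _)
          · rw [Walk.length_cons] at hlen; omega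
          · rw [Walk.isPath_def, Walk.support_transfer]
            exact (Walk.isPath_def _).mp hp
        rcases hor a b hab with h1 | h1
        · exact h1
        · exfalso
          have hsub2 : treeSide G P a b ⊆ treeSide G P b c := by
            refine aux_treeSide_subset P ?_ ?_
            · refine Adj.reachable ?_
              rw [SimpleGraph.deleteEdges_adj]
              refine ⟨hab.symm, ?_⟩
              simp only [Set.mem_singleton_iff]
              intro he
              rcases Sym2.eq_iff.mp he with ⟨h1, h2⟩ | ⟨h1, h2⟩
              · exact hca h2.symm
              · exact hba h2
            · intro hr
              apply aux_bridge hacyc hab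
              refine hr.trans (Adj.reachable ?_)
              rw [SimpleGraph.deleteEdges_adj]
              refine ⟨hbc.symm, ?_⟩
              simp only [Set.mem_singleton_iff]
              intro he
              rcases Sym2.eq_iff.mp he with ⟨h1, h2⟩ | ⟨h1, h2⟩
              · exact hca h1
              · exact hbc.ne h1.symm
          apply hT2 _ h1 _ hQbc
          rw [Set.eq_univ_iff_forall]
          intro x
          have hx : x ∈ treeSide G P a b ∪ treeSide G P b a := by
            rw [aux_cover hconn hP.2 hab]; trivial
          rcases hx with hx | hx
          · exact Or.inr (hsub2 hx)
          · exact Or.inl hx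
  -- the sink belongs to every subgraph in which Q lives
  have hmem : ∀ S' : G.Subgraph, LivesIn G P Q S' → t₀ ∈ S'.verts := by
    intro S' hS'
    obtain ⟨⟨s0, hs0⟩, hlive⟩ := hS'
    have key : ∀ n : ℕ, ∀ s : V, s ∈ S'.verts → ∀ w : G.Walk s t₀, w.IsPath → w.length = n →
        t₀ ∈ S'.verts := by
      intro n
      induction n using Nat.strong_induction_on with
      | _ n ih =>
        intro s hs w hw hlen
        cases w with
        | nil => exact hs
        | @cons _ y _ h p =>
          obtain ⟨hp, hsp⟩ := (Walk.cons_isPath_iff _ _).mp hw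
          by_cases hadj : S'.Adj s y
          · refine ih p.length ?_ y (S'.edge_vert hadj.symm) p hp rfl
            rw [Walk.length_cons] at hlen; omega
          · exfalso
            have h1 : treeSide G P y s ∈ Q := hlive s hs y h hadj
            have hedges : ∀ e ∈ p.edges, e ∈ (G.deleteEdges {s(s,y)}).edgeSet := by
              intro e he
              have h2 := p.edges_subset_edgeSet he
              rw [SimpleGraph.edgeSet_deleteEdges]
              refine ⟨h2, ?_⟩
              simp only [Set.mem_singleton_iff]
              rintro rfl
              exact hsp (p.fst_mem_support_of_mem_edges he)
            have h2 : treeSide G P s y ∈ Q := by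
              refine hbig p.length s y h (p.transfer _ hedges) ?_ (Walk.length_transfer _ _)
              rw [Walk.isPath_def, Walk.support_transfer]
              exact (Walk.isPath_def _).mp hp
            exact huniq h.symm h1 h2
    obtain ⟨w0⟩ := hconn.preconnected s0 t₀
    exact key w0.toPath.1.length s0 hs0 w0.toPath.1 w0.toPath.2 rfl
  constructor
  · -- intersection
    intro S₁ S₂ h1 h2
    refine ⟨⟨t₀, hmem S₁ h1, hmem S₂ h2⟩, ?_⟩
    intro t ht u hadj hnadj
    by_cases hA : S₁.Adj t u
    · have hB : ¬ S₂.Adj t u := fun hB => hnadj ⟨hA, hB⟩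
      exact h2.2 t ht.2 u hadj hB
    · exact h1.2 t ht.1 u hadj hA
  · -- unique minimal subgraph
    refine ⟨⟨{t₀}, fun _ _ => False, fun h => h.elim, fun h => h.elim, ⟨fun _ _ h => h.elim⟩⟩,
      ⟨⟨⟨t₀, rfl⟩, ?_⟩, ?_⟩, ?_⟩
    · intro t ht u hadj _
      have : t = t₀ := ht
      subst this
      exact ht₀ u hadj
    · intro S' hS'
      refine ⟨?_, fun v w h => h.elim⟩
      intro t ht
      have : t = t₀ := ht
      subst this
      exact hmem S' hS'
    · rintro S ⟨hl, hm⟩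
      refine le_antisymm (hm _ ?_) ?_
      · refine ⟨⟨t₀, rfl⟩, ?_⟩
        intro t ht u hadj _
        have : t = t₀ := ht
        subst this
        exact ht₀ u hadj
      · refine ⟨?_, fun v w h => h.elim⟩
        intro t ht
        have : t = t₀ := ht
        subst this
        exact hmem S hl
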